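/- Let R be a commutative Noetherian ring, I an ideal, and M, N finitely generated R-modules. Then the generalized local cohomology module H^j_I(M,N) is I_M-torsion for all j ≥ 0, where I_M = ann_R(M/IM). -/

import Mathlib

open Opposite CategoryTheory CategoryTheory.Limits

noncomputable section

universe u

variable (R : Type u) [CommRing R]

/-- The directed system `n ↦ M ⧸ I^n M` (contravariant in `n`). -/
def modIdealPowersDiagram (I : Ideal R) (M : Type u) [AddCommGroup M] [Module R M] :
    ℕᵒᵖ ⥤ ModuleCat.{u} R where
  obj t := ModuleCat.of R (M ⧸ (I ^ (unop t) • ⊤ : Submodule R M))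
  map w := ModuleCat.ofHom (Submodule.mapQ _ _ LinearMap.id
    (Submodule.smul_mono_left (Ideal.pow_le_pow_right w.unop.down.down)))
  map_id t := by
    ext x
    rfl
  map_comp f g := by
    ext x
    rfl

/-- `H^j_I(M,N) = colim_n Ext^j_R(M/I^nM, N)`, the generalized local cohomology module. -/
def genLocalCohomology (I : Ideal R) (M N : Type u) [AddCommGroup M] [Module R M]
    [AddCommGroup N] [Module R N] (j : ℕ) : ModuleCat.{u} R :=
  colimit ((modIdealPowersDiagram R I M).op ⋙ Ext R (ModuleCat.{u} R) j ⋙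
    (evaluation (ModuleCat.{u} R) (ModuleCat.{u} R)).obj (ModuleCat.of R N))

/-- `Ext^j_R(A, B)` as an `R`-module. -/
def extModule (j : ℕ) (A B : Type u) [AddCommGroup A] [Module R A]
    [AddCommGroup B] [Module R B] : ModuleCat.{u} R :=
  ((Ext R (ModuleCat.{u} R) j).obj (op (ModuleCat.of R A))).obj (ModuleCat.of R B)

/-- `K` is `I`-cofinite: `Supp K ⊆ V(I)` and every `Ext^j_R(R/I, K)` is finitely generated. -/
def IsCofinite (I : Ideal R) (K : Type u) [AddCommGroup K] [Module R K] : Prop :=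
  Module.support R K ⊆ PrimeSpectrum.zeroLocus (I : Set R) ∧
    ∀ j : ℕ, Module.Finite R (extModule R j (R ⧸ I) K)

/-- The `I`-torsion submodule `Γ_I(N)`. -/
def gammaTorsion (I : Ideal R) (N : Type u) [AddCommGroup N] [Module R N] : Submodule R N :=
  ⨆ k : ℕ, Submodule.torsionBySet R N ((I ^ k : Ideal R) : Set R)

/-- `I_M := ann_R(M/IM)`. -/
def idealAnnQuot (I : Ideal R) (M : Type u) [AddCommGroup M] [Module R M] : Ideal R :=
  Module.annihilator R (M ⧸ (I • ⊤ : Submodule R M))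

/-- A minimax module: a f.g. submodule with Artinian quotient. -/
def IsMinimax (K : Type u) [AddCommGroup K] [Module R K] : Prop :=
  ∃ T : Submodule R K, Module.Finite R T ∧ IsArtinian R (K ⧸ T)

/-- A nontrivial module is `p`-secondary if every `a : R` acts surjectively or nilpotently
and `p = √(ann S)`. -/
def IsSecondary (p : Ideal R) (S : Type u) [AddCommGroup S] [Module R S] : Prop :=
  Nontrivial S ∧ (∀ a : R, Function.Surjective (fun s : S => a • s) ∨
    ∃ n : ℕ, ∀ s : S, a ^ n • s = 0) ∧ p = (Module.annihilator R S).radical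

/-- The attached primes of `A`: primes `p` such that `A` has a `p`-secondary quotient. -/
def attachedPrimes (A : Type u) [AddCommGroup A] [Module R A] : Set (Ideal R) :=
  { p | ∃ Q : Submodule R A, IsSecondary R p (A ⧸ Q) }

section Aux
open Opposite CategoryTheory CategoryTheory.Limits
universe v
variable (S : Type v) [CommRing S]

def auxToHom {P : ChainComplex (ModuleCat.{v} S) ℕ} {N : ModuleCat.{v} S} {j : ℕ}
    (x : (P.linearYonedaObj S N).X j) : P.X j ⟶ N := x

lemma auxD_apply (P : ChainComplex (ModuleCat.{v} S) ℕ) (N : ModuleCat.{v} S) (i j : ℕ)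
    (v : P.X j ⟶ N) :
    (P.linearYonedaObj S N).d j i v = P.d i j ≫ v := rfl

lemma auxCycle_comp_zero (P : ChainComplex (ModuleCat.{v} S) ℕ)
    (N : ModuleCat.{v} S) (j : ℕ)
    (z : (P.linearYonedaObj S N).cycles j) :
    P.d (j+1) j ≫ auxToHom S (((P.linearYonedaObj S N).iCycles j) z) = 0 := by
  rw [← auxD_apply]
  calc (P.linearYonedaObj S N).d j (j+1) (((P.linearYonedaObj S N).iCycles j) z)
      = ((P.linearYonedaObj S N).iCycles j ≫ (P.linearYonedaObj S N).d j (j+1)) z := rfl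
    _ = 0 := by rw [HomologicalComplex.iCycles_d]; rfl

lemma auxHomology_smul_zero (P : ChainComplex (ModuleCat.{v} S) ℕ)
    (N : ModuleCat.{v} S) (r : S)
    (h : Homotopy (r • 𝟙 P) 0) (j : ℕ)
    (η : (P.linearYonedaObj S N).homology j) : r • η = 0 := by
  cases j with
  | zero =>
    obtain ⟨z, hz⟩ := (ModuleCat.epi_iff_surjective
      ((P.linearYonedaObj S N).homologyπ 0)).1 inferInstance η
    rw [← hz,
      show r • ((P.linearYonedaObj S N).homologyπ 0) z
        = ((P.linearYonedaObj S N).homologyπ 0) (r • z) from (map_smul _ _ _).symm]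
    have hc : r • 𝟙 (P.X 0) = h.hom 0 1 ≫ P.d 1 0 := by
      have hcomm := h.comm 0
      rw [dNext_eq_zero h.hom 0 (by simp), prevD_eq h.hom
        (by simp : (ComplexShape.down ℕ).Rel 1 0)] at hcomm
      simpa using hcomm
    have hz0 : r • z = 0 := by
      apply (ModuleCat.mono_iff_injective ((P.linearYonedaObj S N).iCycles 0)).1 inferInstance
      rw [map_smul, map_zero]
      show r • auxToHom S (((P.linearYonedaObj S N).iCycles 0) z) = 0
      calc r • auxToHom S (((P.linearYonedaObj S N).iCycles 0) z)
          = (r • 𝟙 (P.X 0)) ≫ auxToHom S (((P.linearYonedaObj S N).iCycles 0) z) := by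
            rw [Linear.smul_comp, Category.id_comp]
        _ = h.hom 0 1 ≫ (P.d 1 0 ≫ auxToHom S (((P.linearYonedaObj S N).iCycles 0) z)) := by
            rw [hc, Category.assoc]
        _ = 0 := by rw [auxCycle_comp_zero, Limits.comp_zero]
    rw [hz0, map_zero]
  | succ k =>
    obtain ⟨z, hz⟩ := (ModuleCat.epi_iff_surjective
      ((P.linearYonedaObj S N).homologyπ (k+1))).1 inferInstance η
    rw [← hz,
      show r • ((P.linearYonedaObj S N).homologyπ (k+1)) z
        = ((P.linearYonedaObj S N).homologyπ (k+1)) (r • z) from (map_smul _ _ _).symm]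
    have hc : r • 𝟙 (P.X (k+1)) = P.d (k+1) k ≫ h.hom k (k+1)
        + h.hom (k+1) (k+2) ≫ P.d (k+2) (k+1) := by
      have hcomm := h.comm (k+1)
      rw [dNext_eq h.hom (by simp : (ComplexShape.down ℕ).Rel (k+1) k),
        prevD_eq h.hom (by simp : (ComplexShape.down ℕ).Rel (k+2) (k+1))] at hcomm
      simpa using hcomm
    set w : P.X (k+1) ⟶ N := auxToHom S (((P.linearYonedaObj S N).iCycles (k+1)) z) with hw
    set v : P.X k ⟶ N := h.hom k (k+1) ≫ w with hv
    have hrw : r • w = P.d (k+1) k ≫ v := by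
      calc r • w = (r • 𝟙 (P.X (k+1))) ≫ w := by rw [Linear.smul_comp, Category.id_comp]
        _ = (P.d (k+1) k ≫ h.hom k (k+1)) ≫ w
            + (h.hom (k+1) (k+2) ≫ P.d (k+2) (k+1)) ≫ w := by
              rw [hc, Preadditive.add_comp]
        _ = P.d (k+1) k ≫ v + h.hom (k+1) (k+2) ≫ (P.d (k+2) (k+1) ≫ w) := by
              rw [Category.assoc, Category.assoc]
        _ = P.d (k+1) k ≫ v := by
              rw [hw, auxCycle_comp_zero, Limits.comp_zero, add_zero]
    have hzv : r • z = ((P.linearYonedaObj S N).toCycles k (k+1)) v := by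
      apply (ModuleCat.mono_iff_injective ((P.linearYonedaObj S N).iCycles (k+1))).1 inferInstance
      rw [map_smul]
      have e1 : (P.linearYonedaObj S N).d k (k+1) v
          = ((P.linearYonedaObj S N).toCycles k (k+1) ≫ (P.linearYonedaObj S N).iCycles (k+1)) v
          := by rw [HomologicalComplex.toCycles_i]
      exact (hrw.trans (auxD_apply S P N (k+1) k v).symm).trans e1
    rw [hzv,
      show ((P.linearYonedaObj S N).homologyπ (k+1)) (((P.linearYonedaObj S N).toCycles k (k+1)) v)
        = ((P.linearYonedaObj S N).toCycles k (k+1) ≫ (P.linearYonedaObj S N).homologyπ (k+1)) v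
        from rfl,
      HomologicalComplex.toCycles_comp_homologyπ]
    rfl

lemma auxExt_smul_zero (A N : ModuleCat.{v} S) (j : ℕ) (r : S)
    (hr : ∀ a : A, r • a = 0)
    (ξ : ((Ext S (ModuleCat.{v} S) j).obj (op A)).obj N) : r • ξ = 0 := by
  have P : CategoryTheory.ProjectiveResolution A := (HasProjectiveResolution.out (Z := A)).some
  have hπ : (r • 𝟙 P.complex) ≫ P.π = 0 := by
    rw [Linear.smul_comp, Category.id_comp]
    ext n
    exact hr ((P.π.f 0) n)
  have h : Homotopy (r • 𝟙 P.complex) 0 := CategoryTheory.ProjectiveResolution.liftHomotopyZero _ hπ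
  have e := P.isoExt (R := S) j N
  have hinj : Function.Injective e.hom :=
    (ModuleCat.mono_iff_injective e.hom).1 inferInstance
  apply hinj
  rw [map_smul, map_zero]
  exact auxHomology_smul_zero S P.complex N r h j (e.hom ξ)

end Aux

section AuxAlg
universe v
variable (S : Type v) [CommRing S]

lemma auxAnnPow_smul_le (I : Ideal S) (M : Type v) [AddCommGroup M] [Module S M] (n : ℕ) :
    (idealAnnQuot S I M) ^ n • (⊤ : Submodule S M) ≤ I ^ n • ⊤ := by
  have base : idealAnnQuot S I M • (⊤ : Submodule S M) ≤ I • ⊤ := by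
    rw [Submodule.smul_le]
    intro r hr m _
    have := Module.mem_annihilator.mp hr (Submodule.Quotient.mk m)
    rwa [← Submodule.Quotient.mk_smul, Submodule.Quotient.mk_eq_zero] at this
  induction n with
  | zero => simp
  | succ n ih =>
    calc (idealAnnQuot S I M) ^ (n+1) • (⊤ : Submodule S M)
        = (idealAnnQuot S I M) ^ n • (idealAnnQuot S I M • ⊤) := by
          rw [← Submodule.smul_assoc, smul_eq_mul, ← pow_succ]
      _ ≤ (idealAnnQuot S I M) ^ n • (I • ⊤) := Submodule.smul_mono le_rfl base
      _ = I • ((idealAnnQuot S I M) ^ n • ⊤) := by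
          rw [← Submodule.smul_assoc, smul_eq_mul, mul_comm, ← smul_eq_mul,
            Submodule.smul_assoc]
      _ ≤ I • (I ^ n • ⊤) := Submodule.smul_mono le_rfl ih
      _ = I ^ (n+1) • ⊤ := by
          rw [← Submodule.smul_assoc, smul_eq_mul, ← pow_succ']

lemma auxSmul_quot_zero (I : Ideal S) (M : Type v) [AddCommGroup M] [Module S M] (n : ℕ)
    (r : S) (hr : r ∈ (idealAnnQuot S I M) ^ n)
    (a : M ⧸ (I ^ n • ⊤ : Submodule S M)) : r • a = 0 := by
  obtain ⟨m, rfl⟩ := Submodule.Quotient.mk_surjective _ a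
  rw [← Submodule.Quotient.mk_smul, Submodule.Quotient.mk_eq_zero]
  exact auxAnnPow_smul_le S I M n (Submodule.smul_mem_smul hr Submodule.mem_top)

end AuxAlg

/-- `H^j_I(M,N)` is `I_M`-torsion, where `I_M = ann_R(M/IM)`. -/
theorem stmt5 [IsNoetherianRing R] (I : Ideal R) (M N : Type u)
    [AddCommGroup M] [Module R M] [Module.Finite R M]
    [AddCommGroup N] [Module R N] [Module.Finite R N] (j : ℕ) :
    gammaTorsion R (idealAnnQuot R I M) (genLocalCohomology R I M N j) = ⊤ := by
  rw [eq_top_iff]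
  intro x _
  haveI : PreservesFilteredColimitsOfSize.{0,0} (forget (ModuleCat.{u} R)) :=
    preservesFilteredColimitsOfSize_shrink _
  haveI : IsFiltered (ℕᵒᵖ)ᵒᵖ := inferInstance
  set F := (modIdealPowersDiagram R I M).op ⋙ Ext R (ModuleCat.{u} R) j ⋙
      (evaluation (ModuleCat.{u} R) (ModuleCat.{u} R)).obj (ModuleCat.of R N) with hF
  obtain ⟨t, y, hy⟩ := Concrete.colimit_exists_rep F x
  refine Submodule.mem_iSup_of_mem (unop (unop t)) ?_
  rw [Submodule.mem_torsionBySet_iff]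
  rintro ⟨r, hr⟩
  rw [← hy]
  have h0 : r • y = 0 := auxExt_smul_zero R
    (ModuleCat.of R (M ⧸ (I ^ (unop (unop t)) • ⊤ : Submodule R M))) (ModuleCat.of R N) j r
    (fun a => auxSmul_quot_zero R I M (unop (unop t)) r hr a) y
  show r • (colimit.ι F t) y = 0
  rw [show r • (colimit.ι F t) y = (colimit.ι F t) (r • y) from (map_smul _ _ _).symm, h0,
    map_zero]

end
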